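/- For every connected graph G of order n and every integer k with 3 ≤ k ≤ n, the generalized k-connectivity satisfies 1 ≤ κ_k(G) ≤ n − ⌈k/2⌉. -/

import Mathlib

open SimpleGraph

variable {V : Type*}

/-- An `S`-Steiner tree in `G`: a subgraph of `G` that is a tree and contains all of `S`. -/
def IsSteinerTree (G : SimpleGraph V) (S : Set V) (T : G.Subgraph) : Prop :=
  S ⊆ T.verts ∧ T.coe.IsTree

/-- The maximum number of pairwise edge-disjoint `S`-Steiner trees in `G`. -/
noncomputable def steinerEdgeConn (G : SimpleGraph V) (S : Set V) : ℕ :=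
  sSup {n : ℕ | ∃ f : Fin n → G.Subgraph, (∀ i, IsSteinerTree G S (f i)) ∧
    ∀ i j, i ≠ j → Disjoint (f i).edgeSet (f j).edgeSet}

/-- The maximum number of pairwise internally disjoint `S`-Steiner trees in `G`. -/
noncomputable def steinerConn (G : SimpleGraph V) (S : Set V) : ℕ :=
  sSup {n : ℕ | ∃ f : Fin n → G.Subgraph, (∀ i, IsSteinerTree G S (f i)) ∧
    ∀ i j, i ≠ j → Disjoint (f i).edgeSet (f j).edgeSet ∧
      (f i).verts ∩ (f j).verts = S}

/-- The generalized `k`-edge-connectivity `λ_k(G)`. -/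
noncomputable def genEdgeConn (G : SimpleGraph V) (k : ℕ) : ℕ :=
  sInf {m : ℕ | ∃ S : Set V, S.ncard = k ∧ steinerEdgeConn G S = m}

/-- The generalized `k`-connectivity `κ_k(G)`. -/
noncomputable def genConn (G : SimpleGraph V) (k : ℕ) : ℕ :=
  sInf {m : ℕ | ∃ S : Set V, S.ncard = k ∧ steinerConn G S = m}

/-- The edge-connectivity `λ(G)`: the least size of a set of edges whose removal
disconnects the graph. -/
noncomputable def edgeConn (G : SimpleGraph V) : ℕ :=
  sInf {m : ℕ | ∃ M : Set (Sym2 V), M ⊆ G.edgeSet ∧ M.ncard = m ∧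
    ¬ (G.deleteEdges M).Connected}

/-- The vertex-connectivity `κ(G)`: the least size of a set of vertices whose removal
leaves a non-connected graph. -/
noncomputable def vertConn (G : SimpleGraph V) : ℕ :=
  sInf {m : ℕ | ∃ A : Set V, A.ncard = m ∧ ¬ (G.induce (Aᶜ : Set V)).Connected}


/-- The minimum degree `δ(G)` (as the least cardinality of a neighbor set). -/
noncomputable def minDeg (G : SimpleGraph V) : ℕ :=
  sInf {d : ℕ | ∃ v : V, (G.neighborSet v).ncard = d}


lemma reachable_mono_del {H : SimpleGraph V} {v w : V}
    (hr : (H \ fromEdgeSet {s(v, w)}).Reachable v w) :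
    ∀ {a b : V}, H.Reachable a b → (H \ fromEdgeSet {s(v, w)}).Reachable a b := by
  intro a b ⟨p⟩
  induction p with
  | nil => rfl
  | @cons x y z h p ih =>
    refine Reachable.trans ?_ ih
    by_cases he : s(x, y) = s(v, w)
    · rw [Sym2.eq_iff] at he
      rcases he with ⟨rfl, rfl⟩ | ⟨rfl, rfl⟩
      · exact hr
      · exact hr.symm
    · refine ⟨Walk.cons ?_ Walk.nil⟩
      simp only [sdiff_adj, fromEdgeSet_adj, Set.mem_singleton_iff]
      exact ⟨h, fun hmem => he hmem.1⟩

lemma exists_spanning_tree [Fintype V] (G : SimpleGraph V) (hG : G.Connected) :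
    ∃ H : SimpleGraph V, H ≤ G ∧ H.IsTree := by
  classical
  have hPne : ∃ m, m ∈ {m | ∃ H : SimpleGraph V, H ≤ G ∧ H.Connected ∧ H.edgeSet.ncard = m} :=
    ⟨_, G, le_rfl, hG, rfl⟩
  obtain ⟨H, hle, hc, hcard⟩ := Nat.sInf_mem hPne
  refine ⟨H, hle, hc, ?_⟩
  rw [isAcyclic_iff_forall_adj_isBridge]
  by_contra hb
  push_neg at hb
  obtain ⟨v, w, hvw, hnb⟩ := hb
  rw [isBridge_iff] at hnb
  have hr : (H \ fromEdgeSet {s(v, w)}).Reachable v w := not_not.mp hnb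
  set H' := H \ fromEdgeSet {s(v, w)} with hH'
  have hc' : H'.Connected := by
    have : Nonempty V := hc.nonempty
    exact ⟨fun a b => reachable_mono_del hr (hc.preconnected a b)⟩
  have hE' : H'.edgeSet = H.edgeSet \ {s(v, w)} := by
    rw [hH', edgeSet_sdiff, edgeSet_fromEdgeSet, edgeSet_sdiff_sdiff_isDiag]
  have hlt : H'.edgeSet.ncard < H.edgeSet.ncard := by
    rw [hE']
    refine Set.ncard_lt_ncard ?_ (Set.toFinite _)
    constructor
    · exact Set.diff_subset
    · intro hsub
      exact (hsub (by exact hvw : s(v,w) ∈ H.edgeSet)).2 rfl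
  have hmem : H'.edgeSet.ncard ∈ {m | ∃ H : SimpleGraph V, H ≤ G ∧ H.Connected ∧ H.edgeSet.ncard = m} :=
    ⟨H', le_trans (sdiff_le) hle, hc', rfl⟩
  have h2 := Nat.sInf_le hmem
  omega

lemma coe_isTree_of_isTree {G H : SimpleGraph V} (hle : H ≤ G) (hT : H.IsTree) :
    (SimpleGraph.toSubgraph H hle).coe.IsTree := by
  classical
  have hne : Nonempty V := hT.isConnected.nonempty
  constructor
  · have : Nonempty ↑(toSubgraph H hle).verts := ⟨⟨Classical.arbitrary V, trivial⟩⟩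
    refine ⟨fun x y => ?_⟩
    obtain ⟨a, ha⟩ := x
    obtain ⟨b, hb⟩ := y
    obtain ⟨p⟩ := hT.isConnected.preconnected a b
    let f : H →g (SimpleGraph.toSubgraph H hle).coe :=
      ⟨fun v => ⟨v, trivial⟩, fun h => h⟩
    exact ⟨(p.map f).copy rfl rfl⟩
  · intro v c hc
    let f : (SimpleGraph.toSubgraph H hle).coe →g H := ⟨fun a => a.1, fun h => h⟩
    have hinj : Function.Injective f := fun x y h => Subtype.ext h
    exact hT.IsAcyclic (c.map f) (hc.map hinj)

lemma tree_edge_count [Fintype V] {G : SimpleGraph V} {S : Set V} {k : ℕ}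
    (hS : S.ncard = k) (T : G.Subgraph) (hv : T.verts = S) (ht : T.coe.IsTree) :
    T.edgeSet.ncard = k - 1 := by
  classical
  have : Fintype ↥T.verts := Set.Finite.fintype (Set.toFinite _)
  have : Fintype ↥(T.coe.edgeSet) := Set.Finite.fintype (Set.toFinite _)
  have hcard := ht.card_edgeFinset
  have hkv : Fintype.card ↥T.verts = k := by
    rw [← Nat.card_eq_fintype_card, Nat.card_coe_set_eq, hv, hS]
  have h1 : T.edgeSet = Sym2.map (↑) '' T.coe.edgeSet := (Subgraph.image_coe_edgeSet_coe T).symm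
  rw [h1, Set.ncard_image_of_injective _ (Sym2.map.injective Subtype.val_injective),
    Set.ncard_eq_toFinset_card']
  have h2 : T.coe.edgeSet.toFinset = T.coe.edgeFinset := by
    simp [edgeFinset]
  rw [h2]
  omega

lemma ncard_E [Fintype V] {S : Set V} {k : ℕ} (hS : S.ncard = k) :
    {e : Sym2 V | ¬ e.IsDiag ∧ ∀ x ∈ e, x ∈ S}.ncard = k * (k - 1) / 2 := by
  classical
  have : Fintype ↥S := Set.Finite.fintype (Set.toFinite _)
  have hEeq : {e : Sym2 V | ¬ e.IsDiag ∧ ∀ x ∈ e, x ∈ S}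
      = Sym2.map (Subtype.val : ↥S → V) '' {e : Sym2 ↥S | ¬ e.IsDiag} := by
    ext e
    constructor
    · rintro ⟨hd, hmem⟩
      obtain ⟨a, b⟩ := e
      refine ⟨s(⟨a, hmem a (by simp)⟩, ⟨b, hmem b (by simp)⟩), ?_, rfl⟩
      simp only [Set.mem_setOf_eq, Sym2.isDiag_iff_proj_eq] at hd ⊢
      exact fun h => hd (congrArg Subtype.val h)
    · rintro ⟨e', hd, rfl⟩
      obtain ⟨a, b⟩ := e'
      refine ⟨?_, ?_⟩
      · simp only [Set.mem_setOf_eq, Sym2.isDiag_iff_proj_eq, Sym2.map_pair_eq] at hd ⊢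
        exact fun h => hd (Subtype.ext h)
      · intro x hx
        simp only [Sym2.map_pair_eq, Sym2.mem_iff] at hx
        rcases hx with rfl | rfl
        · exact a.2
        · exact b.2
  rw [hEeq, Set.ncard_image_of_injective _ (Sym2.map.injective Subtype.val_injective)]
  have h1 : {e : Sym2 ↥S | ¬ e.IsDiag}.ncard = Fintype.card {e : Sym2 ↥S // ¬ e.IsDiag} := by
    rw [← Nat.card_coe_set_eq, Nat.card_eq_fintype_card]
    rfl
  rw [h1, Sym2.card_subtype_not_diag]
  have hk : Fintype.card ↥S = k := by
    rw [← Nat.card_eq_fintype_card, Nat.card_coe_set_eq, hS]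
  rw [hk, Nat.choose_two_right]

lemma key [Fintype V] (G : SimpleGraph V) {S : Set V} {k n m : ℕ}
    (hn : Fintype.card V = n) (hS : S.ncard = k) (h3 : 3 ≤ k) (hkn : k ≤ n)
    (f : Fin m → G.Subgraph) (hst : ∀ i, IsSteinerTree G S (f i))
    (hd : ∀ i j, i ≠ j → Disjoint (f i).edgeSet (f j).edgeSet ∧
      (f i).verts ∩ (f j).verts = S) :
    m ≤ n - (k + 1) / 2 := by
  classical
  set A : Finset (Fin m) := Finset.univ.filter (fun i => (f i).verts = S) with hA
  set B : Finset (Fin m) := Finset.univ.filter (fun i => ¬ (f i).verts = S) with hB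
  have hAB : A.card + B.card = m := by
    rw [hA, hB, Finset.card_filter_add_card_filter_not, Finset.card_univ, Fintype.card_fin]
  -- bound on B
  have hBb : B.card ≤ n - k := by
    have hx : ∀ i ∈ B, ∃ v, v ∈ (f i).verts ∧ v ∉ S := by
      intro i hi
      rw [hB, Finset.mem_filter] at hi
      by_contra hc
      push_neg at hc
      exact hi.2 (Set.Subset.antisymm hc (hst i).1)
    have hne : Nonempty V := by
      refine Fintype.card_pos_iff.mp ?_
      omega
    choose g hg1 hg2 using hx
    have hinj : ∀ i (hi : i ∈ B) j (hj : j ∈ B), g i hi = g j hj → i = j := by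
      intro i hi j hj hij
      by_contra hne
      have h1 := (hd i j hne).2
      have : g i hi ∈ (f i).verts ∩ (f j).verts := ⟨hg1 i hi, hij ▸ hg1 j hj⟩
      rw [h1] at this
      exact hg2 i hi this
    have hmaps : ∀ i (hi : i ∈ B), g i hi ∈ (Sᶜ).toFinset := by
      intro i hi
      simp only [Set.mem_toFinset, Set.mem_compl_iff]
      exact hg2 i hi
    have hcard := Finset.card_le_card_of_injOn (s := B) (t := (Sᶜ).toFinset)
      (fun i => if h : i ∈ B then g i h else Classical.arbitrary V) ?_ ?_
    · have hcompl : (Sᶜ).toFinset.card = n - k := by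
        have := Set.ncard_add_ncard_compl S (Set.toFinite _)
        rw [hS] at this
        have h2 : (Sᶜ : Set V).ncard = (Sᶜ).toFinset.card := Set.ncard_eq_toFinset_card' _
        have h3' : Nat.card V = n := by
          rw [Nat.card_eq_fintype_card, hn]
        omega
      omega
    · intro i hi
      dsimp only
      rw [dif_pos (show i ∈ B from hi)]
      exact hmaps i hi
    · intro i hi j hj hij
      have hi' : i ∈ B := hi
      have hj' : j ∈ B := hj
      dsimp only at hij
      rw [dif_pos hi', dif_pos hj'] at hij
      exact hinj i hi' j hj' hij
  -- bound on A
  have hAb : 2 * A.card ≤ k := by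
    set E : Set (Sym2 V) := {e : Sym2 V | ¬ e.IsDiag ∧ ∀ x ∈ e, x ∈ S} with hE
    set g : Fin m → Finset (Sym2 V) := fun i => (Set.toFinite (f i).edgeSet).toFinset with hgdef
    have hgsub : ∀ i ∈ A, g i ⊆ (Set.toFinite E).toFinset := by
      intro i hi
      rw [hA, Finset.mem_filter] at hi
      intro e he
      rw [hgdef, Set.Finite.mem_toFinset] at he
      rw [Set.Finite.mem_toFinset]
      induction e with
      | h a b =>
        rw [Subgraph.mem_edgeSet] at he
        refine ⟨?_, ?_⟩
        · simp only [Sym2.isDiag_iff_proj_eq]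
          exact he.adj_sub.ne
        · intro x hx
          rcases Sym2.mem_iff.mp hx with rfl | rfl
          · exact hi.2 ▸ he.fst_mem
          · exact hi.2 ▸ he.snd_mem
    have hgcard : ∀ i ∈ A, (g i).card = k - 1 := by
      intro i hi
      rw [hA, Finset.mem_filter] at hi
      rw [hgdef]
      have := tree_edge_count hS (f i) hi.2 (hst i).2
      rw [Set.ncard_eq_toFinset_card _ (Set.toFinite _)] at this
      exact this
    have hdisj : ∀ i ∈ A, ∀ j ∈ A, i ≠ j → Disjoint (g i) (g j) := by
      intro i _ j _ hne
      rw [hgdef, Set.Finite.disjoint_toFinset]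
      exact (hd i j hne).1
    have hbu := Finset.card_biUnion hdisj
    have hsub : A.biUnion g ⊆ (Set.toFinite E).toFinset := by
      intro e he
      obtain ⟨i, hi, hei⟩ := Finset.mem_biUnion.mp he
      exact hgsub i hi hei
    have h1 : ∑ i ∈ A, (g i).card = A.card * (k - 1) := by
      rw [Finset.sum_congr rfl hgcard, Finset.sum_const, smul_eq_mul]
    have h2 : (Set.toFinite E).toFinset.card = k * (k - 1) / 2 := by
      rw [← Set.ncard_eq_toFinset_card]
      exact ncard_E hS
    have h4 : A.card * (k - 1) ≤ k * (k - 1) / 2 := by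
      rw [← h1, ← hbu, ← h2]
      exact Finset.card_le_card hsub
    have h5 : 2 * (k * (k - 1) / 2) = k * (k - 1) := by
      refine Nat.two_mul_div_two_of_even ?_
      rcases Nat.even_or_odd k with h | h
      · exact h.mul_right _
      · refine Even.mul_left ?_ _
        rcases h with ⟨c, hc⟩
        exact ⟨c, by omega⟩
    have h6 : (2 * A.card) * (k - 1) ≤ k * (k - 1) := by
      calc (2 * A.card) * (k - 1) = 2 * (A.card * (k - 1)) := by ring
      _ ≤ 2 * (k * (k - 1) / 2) := by omega
      _ = k * (k - 1) := h5
    exact Nat.le_of_mul_le_mul_right h6 (by omega)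
  omega

theorem genConn_bounds {V : Type*} [Fintype V] (G : SimpleGraph V) (n k : ℕ)
    (hn : Fintype.card V = n) (hG : G.Connected) (h3 : 3 ≤ k) (hkn : k ≤ n) :
    1 ≤ genConn G k ∧ genConn G k ≤ n - (k + 1) / 2 := by
  classical
  obtain ⟨S, hSsub, hSk⟩ := Set.exists_subset_card_eq
    (show k ≤ (Set.univ : Set V).ncard by
      rw [Set.ncard_univ, Nat.card_eq_fintype_card, hn]; exact hkn)
  have hbound : ∀ (S' : Set V), S'.ncard = k →
      ∀ m ∈ {n' : ℕ | ∃ f : Fin n' → G.Subgraph, (∀ i, IsSteinerTree G S' (f i)) ∧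
        ∀ i j, i ≠ j → Disjoint (f i).edgeSet (f j).edgeSet ∧
          (f i).verts ∩ (f j).verts = S'}, m ≤ n - (k + 1) / 2 := by
    rintro S' hS' m ⟨f, hst, hd⟩
    exact key G hn hS' h3 hkn f hst hd
  have hone : ∀ (S' : Set V), S'.ncard = k → 1 ≤ steinerConn G S' := by
    intro S' hS'
    obtain ⟨H, hle, hT⟩ := exists_spanning_tree G hG
    refine le_csSup ⟨n - (k + 1) / 2, fun m hm => hbound S' hS' m hm⟩ ?_
    refine ⟨fun _ => SimpleGraph.toSubgraph H hle, fun i => ⟨fun x _ => trivial, ?_⟩,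
      fun i j hij => absurd (Subsingleton.elim i j) hij⟩
    exact coe_isTree_of_isTree hle hT
  constructor
  · refine le_csInf ⟨steinerConn G S, S, hSk, rfl⟩ ?_
    rintro m ⟨S', hS', rfl⟩
    exact hone S' hS'
  · refine le_trans (Nat.sInf_le ⟨S, hSk, rfl⟩) ?_
    refine csSup_le ⟨0, Fin.elim0, fun i => i.elim0, fun i => i.elim0⟩ ?_
    intro m hm
    exact hbound S hSk m hm
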